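/- arXiv:2104.09761 — 7 statements merged into one kernel-verified Lean document; each statement's English description precedes it below -/
import Mathlib

section
/- Let l be a prime number, s a positive integer, and S a finite set of prime numbers. Then there exists an integer N > 1 such that: (i) N is not divisible by l nor by any prime in S; (ii) letting r denote the multiplicative order of l modulo N (the least positive integer with N ∣ l^r − 1), s divides r; and (iii) if r is even, then N does not divide l^{r/2} + 1. -/
lemma geom_nat (x n : ℕ) (hx : 1 ≤ x) :
    (x - 1) * ∑ i ∈ Finset.range n, x ^ i = x ^ n - 1 := by
  induction n with
  | zero => simp
  | succ n ih =>
    rw [Finset.sum_range_succ, Nat.mul_add, ih]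
    have h1 : 1 ≤ x ^ n := Nat.one_le_pow _ _ hx
    have h2 : x ^ n ≤ x ^ (n+1) := Nat.pow_le_pow_right hx (by omega)
    have h3 : (x - 1) * x ^ n = x ^ (n+1) - x ^ n := by
      rw [Nat.sub_mul, one_mul, ← pow_succ']
    omega

lemma prod_pp_dvd (S : Finset ℕ) (hS : ∀ p ∈ S, p.Prime) (f : ℕ → ℕ) (n : ℕ)
    (h : ∀ p ∈ S, p ^ f p ∣ n) : (∏ p ∈ S, p ^ f p) ∣ n := by
  induction S using Finset.induction with
  | empty => simp
  | @insert a s ha ih =>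
    rw [Finset.prod_insert ha]
    have hap : a.Prime := hS a (Finset.mem_insert_self a s)
    have hcop : Nat.Coprime (a ^ f a) (∏ p ∈ s, p ^ f p) := by
      apply Nat.Coprime.pow_left
      apply Nat.Coprime.prod_right
      intro q hq
      apply Nat.Coprime.pow_right
      exact (Nat.coprime_primes hap (hS q (Finset.mem_insert_of_mem hq))).mpr
        (by rintro rfl; exact ha hq)
    exact hcop.mul_dvd_of_dvd_of_dvd (h a (Finset.mem_insert_self a s))
      (ih (fun p hp => hS p (Finset.mem_insert_of_mem hp))
          (fun p hp => h p (Finset.mem_insert_of_mem hp)))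

/-- Let `l` be a prime, `s` a positive integer, `S` a finite set of primes.
There is an integer `N > 1`, not divisible by `l` nor by any prime in `S`, such that,
letting `r` be the multiplicative order of `l` modulo `N` (the least positive integer with
`N ∣ l ^ r - 1`), one has `s ∣ r`, and if `r` is even then `N ∤ l ^ (r / 2) + 1`. -/
theorem exists_N_order_divisible (l s : ℕ) (hl : l.Prime) (hs : 0 < s)
    (S : Finset ℕ) (hS : ∀ p ∈ S, p.Prime) :
    ∃ N : ℕ, 1 < N ∧ ¬ l ∣ N ∧ (∀ p ∈ S, ¬ p ∣ N) ∧
      ∀ r : ℕ, IsLeast {r : ℕ | 0 < r ∧ N ∣ l ^ r - 1} r →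
        s ∣ r ∧ (Even r → ¬ N ∣ l ^ (r / 2) + 1) := by
  have hl2 : 2 ≤ l := hl.two_le
  obtain ⟨t, ht_ge, ht⟩ := Nat.exists_infinite_primes (2 * s + S.sup id + 3)
  set m := s * t with hm_def
  have hm_pos : 0 < m := Nat.mul_pos hs (by omega)
  have hm_ge : 2 * s + 2 ≤ m := by
    have : t ≤ m := Nat.le_mul_of_pos_left t hs
    omega
  set X := l ^ m - 1 with hX_def
  have hlm : 2 ≤ l ^ m := le_trans hl2 (Nat.le_self_pow (by omega) l)
  have hX_pos : 0 < X := by omega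
  set Y := l ^ s - 1 with hY_def
  have hls : 2 ≤ l ^ s := le_trans hl2 (Nat.le_self_pow (by omega) l)
  have hY_pos : 0 < Y := by omega
  have hYX : Y ∣ X := by
    have h := Nat.sub_dvd_pow_sub_pow (l ^ s) 1 t
    simpa [← pow_mul, ← hm_def] using h
  -- key valuation bound
  have key : ∀ p ∈ S, p ^ (X.factorization p) ∣ Y := by
    intro p hpS
    have hp := hS p hpS
    by_cases hpX : p ∣ X
    swap
    · simp [Nat.factorization_eq_zero_of_not_dvd hpX]
    have hpt : p < t := by
      have : p ≤ S.sup id := Finset.le_sup (f := id) hpS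
      omega
    haveI : Fact p.Prime := ⟨hp⟩
    have hcast : ((l : ZMod p)) ^ m = 1 := by
      have h0 : ((X : ℕ) : ZMod p) = 0 := (ZMod.natCast_eq_zero_iff _ _).mpr hpX
      rw [hX_def, Nat.cast_sub (by omega : 1 ≤ l ^ m), Nat.cast_pow, Nat.cast_one,
        sub_eq_zero] at h0
      exact h0
    have hl0 : (l : ZMod p) ≠ 0 := by
      intro h
      rw [h, zero_pow hm_pos.ne'] at hcast
      exact zero_ne_one hcast
    have hd1 : orderOf (l : ZMod p) ∣ p - 1 :=
      orderOf_dvd_of_pow_eq_one (ZMod.pow_card_sub_one_eq_one hl0)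
    have hdlt : orderOf (l : ZMod p) < t := by
      have := Nat.le_of_dvd (by have := hp.two_le; omega) hd1
      omega
    have hds : orderOf (l : ZMod p) ∣ s := by
      have h1 : orderOf (l : ZMod p) ∣ s * t := orderOf_dvd_of_pow_eq_one hcast
      have hd_pos : 0 < orderOf (l : ZMod p) := by
        rcases Nat.eq_zero_or_pos (orderOf (l : ZMod p)) with h0 | h0
        · exfalso; rw [h0] at hd1
          have := Nat.eq_zero_of_zero_dvd hd1
          have := hp.two_le; omega
        · exact h0
      have h2 : Nat.Coprime (orderOf (l : ZMod p)) t := by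
        rw [Nat.coprime_comm]
        refine (ht.coprime_iff_not_dvd).mpr fun hc => ?_
        have := Nat.le_of_dvd hd_pos hc
        omega
      exact h2.dvd_of_dvd_mul_right h1
    have hpY : p ∣ Y := by
      have h1 : (l : ZMod p) ^ s = 1 := orderOf_dvd_iff_pow_eq_one.mp hds
      have : ((Y : ℕ) : ZMod p) = 0 := by
        rw [hY_def, Nat.cast_sub (by omega : 1 ≤ l ^ s), Nat.cast_pow, Nat.cast_one,
          sub_eq_zero]
        exact h1
      exact (ZMod.natCast_eq_zero_iff _ _).mp this
    -- geometric factorization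
    have hSig : X = Y * (∑ i ∈ Finset.range t, (l ^ s) ^ i) := by
      rw [hY_def, geom_nat _ _ (by omega), ← pow_mul, ← hm_def, hX_def]
    have hlsp : ((l : ZMod p) ^ s) = 1 := by
      have : ((Y : ℕ) : ZMod p) = 0 := (ZMod.natCast_eq_zero_iff _ _).mpr hpY
      rwa [hY_def, Nat.cast_sub (by omega : 1 ≤ l ^ s), Nat.cast_pow, Nat.cast_one,
        sub_eq_zero] at this
    have hpSig : ¬ p ∣ ∑ i ∈ Finset.range t, (l ^ s) ^ i := by
      intro hc
      have h0 : (((∑ i ∈ Finset.range t, (l ^ s) ^ i : ℕ)) : ZMod p) = 0 :=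
        (ZMod.natCast_eq_zero_iff _ _).mpr hc
      rw [Nat.cast_sum] at h0
      have h1 : (((∑ i ∈ Finset.range t, (l ^ s) ^ i : ℕ)) : ZMod p) = (t : ZMod p) := by
        rw [Nat.cast_sum]
        have : ∀ i ∈ Finset.range t, (((l ^ s) ^ i : ℕ) : ZMod p) = 1 := by
          intro i _
          push_cast
          rw [hlsp, one_pow]
        rw [Finset.sum_congr rfl this]
        simp
      rw [Nat.cast_sum] at h1
      rw [h0] at h1
      have hpt' : p ∣ t := (ZMod.natCast_eq_zero_iff _ _).mp h1.symm
      have := (Nat.prime_dvd_prime_iff_eq hp ht).mp hpt'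
      omega
    have hSigpos : 0 < ∑ i ∈ Finset.range t, (l ^ s) ^ i := by
      rcases Nat.eq_zero_or_pos (∑ i ∈ Finset.range t, (l ^ s) ^ i) with h0 | h0
      · exfalso
        have hX0 : X = 0 := by rw [hSig, h0, mul_zero]
        omega
      · exact h0
    have hfac : X.factorization p ≤ Y.factorization p := by
      rw [hSig, Nat.factorization_mul hY_pos.ne' hSigpos.ne']
      simp [Nat.factorization_eq_zero_of_not_dvd hpSig]
    exact dvd_trans (pow_dvd_pow p hfac) (Nat.ordProj_dvd Y p)
  set D := ∏ p ∈ S, p ^ (X.factorization p) with hD_def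
  have hDY : D ∣ Y := prod_pp_dvd S hS _ Y key
  have hDX : D ∣ X := hDY.trans hYX
  have hD_le : D ≤ Y := Nat.le_of_dvd hY_pos hDY
  have hD_pos : 0 < D := Nat.pos_of_dvd_of_pos hDY hY_pos
  set N := X / D with hN_def
  have hND : N * D = X := Nat.div_mul_cancel hDX
  have hN1 : 1 < N := by
    rcases Nat.lt_or_ge N 2 with h | h
    · interval_cases N
      · omega
      · have : D = X := by omega
        have hXY : X ≤ Y := this ▸ hD_le
        have : l ^ m ≤ l ^ s := by omega
        have := (Nat.pow_le_pow_iff_right (by omega : 1 < l)).mp this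
        omega
    · omega
  have hNX : N ∣ X := ⟨D, hND.symm⟩
  refine ⟨N, hN1, ?_, ?_, ?_⟩
  · intro hc
    have h1 : l ∣ X := hc.trans hNX
    have h2 : l ∣ l ^ m := dvd_pow_self l hm_pos.ne'
    have h3 := Nat.dvd_sub h2 h1
    have h4 : l ^ m - X = 1 := by omega
    rw [h4] at h3
    have := Nat.le_of_dvd one_pos h3
    omega
  · intro p hpS hc
    have hp := hS p hpS
    have h1 : p ^ (X.factorization p) ∣ D := Finset.dvd_prod_of_mem _ hpS
    have h2 : p ^ (X.factorization p + 1) ∣ X := by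
      rw [pow_succ]
      calc p ^ X.factorization p * p ∣ D * N := mul_dvd_mul h1 hc
        _ = X := by rw [mul_comm]; exact hND
    have := (hp.pow_dvd_iff_le_factorization hX_pos.ne').mp h2
    omega
  · intro r hr
    haveI : NeZero N := ⟨by omega⟩
    have hcastiff : ∀ k : ℕ, (N ∣ l ^ k - 1 ↔ (l : ZMod N) ^ k = 1) := by
      intro k
      rw [← ZMod.natCast_eq_zero_iff,
        Nat.cast_sub (Nat.one_le_pow _ _ (by omega)), Nat.cast_pow, Nat.cast_one,
        sub_eq_zero]
    have hxm : (l : ZMod N) ^ m = 1 := (hcastiff m).mp (hX_def ▸ hNX)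
    have hdm : orderOf (l : ZMod N) ∣ m := orderOf_dvd_of_pow_eq_one hxm
    have hd_pos : 0 < orderOf (l : ZMod N) := by
      rcases Nat.eq_zero_or_pos (orderOf (l : ZMod N)) with h | h
      · rw [h] at hdm
        have := Nat.eq_zero_of_zero_dvd hdm
        omega
      · exact h
    have hdmem : orderOf (l : ZMod N) ∈ {r : ℕ | 0 < r ∧ N ∣ l ^ r - 1} :=
      ⟨hd_pos, (hcastiff _).mpr (pow_orderOf_eq_one _)⟩
    have hrd : r = orderOf (l : ZMod N) :=
      le_antisymm (hr.2 hdmem)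
        (Nat.le_of_dvd hr.1.1 (orderOf_dvd_of_pow_eq_one ((hcastiff r).mp hr.1.2)))
    have hrm : r ∣ m := hrd ▸ hdm
    have hr_pos : 0 < r := hr.1.1
    have hr_eq : r = m := by
      by_contra hne
      obtain ⟨n, hn⟩ := hrm
      have hn2 : 2 ≤ n := by
        rcases n with _ | _ | n
        · omega
        · omega
        · omega
      obtain ⟨k, hk⟩ := hr.1.2
      have hgeom : (l ^ r - 1) * (∑ i ∈ Finset.range n, (l ^ r) ^ i) = X := by
        rw [geom_nat _ _ (Nat.one_le_pow _ _ (by omega)), ← pow_mul, ← hn, hX_def]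
      have hkQ : k * (∑ i ∈ Finset.range n, (l ^ r) ^ i) = D := by
        have h1 : N * (k * (∑ i ∈ Finset.range n, (l ^ r) ^ i)) = N * D := by
          rw [← mul_assoc, ← hk, hgeom, ← hND]
        exact Nat.eq_of_mul_eq_mul_left (by omega) h1
      have hQD : (∑ i ∈ Finset.range n, (l ^ r) ^ i) ≤ D :=
        Nat.le_of_dvd hD_pos ⟨k, by rw [← hkQ, mul_comm]⟩
      have hQ_ge : l ^ (m - r) ≤ ∑ i ∈ Finset.range n, (l ^ r) ^ i := by
        have hmem : n - 1 ∈ Finset.range n := by simp; omega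
        have h := Finset.single_le_sum (f := fun i => (l ^ r) ^ i)
          (fun i _ => Nat.zero_le _) hmem
        calc l ^ (m - r) = (l ^ r) ^ (n - 1) := by
              rw [← pow_mul]
              congr 1
              have h7 : r * n = r * (n - 1) + r := by
                cases n with
                | zero => omega
                | succ n => rw [Nat.succ_sub_one]; ring
              omega
          _ ≤ _ := h
      have h2r : 2 * r ≤ m := by
        have h5 : r * 2 ≤ r * n := Nat.mul_le_mul (le_refl r) hn2
        omega
      have hmr : s + 1 ≤ m - r := by omega
      have hle : l ^ (s + 1) ≤ l ^ (m - r) := Nat.pow_le_pow_right (by omega) hmr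
      have hYlt : Y < l ^ (s + 1) := by
        have : l ^ s < l ^ (s + 1) := Nat.pow_lt_pow_right (by omega) (by omega)
        omega
      omega
    refine ⟨hr_eq ▸ ⟨t, rfl⟩, ?_⟩
    intro hre hc
    rw [hr_eq] at hre hc
    obtain ⟨h, hh⟩ := hre
    have hh2 : m / 2 = h := by omega
    rw [hh2] at hc
    have h1lh : 1 ≤ l ^ h := Nat.one_le_pow _ _ (by omega)
    have hfact : (l ^ h - 1) * (l ^ h + 1) = X := by
      have hpm : l ^ m = l ^ h * l ^ h := by rw [hh, pow_add]
      have h2' : 1 ≤ l ^ h * l ^ h := Nat.one_le_iff_ne_zero.mpr (by positivity)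
      rw [hX_def, hpm]
      zify [h1lh, h2']
      try ring
    obtain ⟨k, hk⟩ := hc
    have hk_pos : 0 < k := by
      rcases Nat.eq_zero_or_pos k with h' | h'
      · rw [h', mul_zero] at hk; omega
      · exact h'
    have hDk : (l ^ h - 1) * k = D := by
      have h1 : N * ((l ^ h - 1) * k) = N * D := by
        calc N * ((l ^ h - 1) * k) = (l ^ h - 1) * (N * k) := by ring
          _ = (l ^ h - 1) * (l ^ h + 1) := by rw [← hk]
          _ = X := hfact
          _ = N * D := hND.symm
      exact Nat.eq_of_mul_eq_mul_left (by omega) h1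
    have hle1 : l ^ h - 1 ≤ D := by
      calc l ^ h - 1 ≤ (l ^ h - 1) * k := Nat.le_mul_of_pos_right _ hk_pos
        _ = D := hDk
    have hh_ge : s + 1 ≤ h := by omega
    have hle2 : l ^ (s + 1) ≤ l ^ h := Nat.pow_le_pow_right (by omega) hh_ge
    have hYlt : l ^ s < l ^ (s + 1) := Nat.pow_lt_pow_right (by omega) (by omega)
    omega
end

section
/- Let l ≥ 2 and t ≥ 3 be integers. Then there exist odd primes A and B with A ∣ l^{2^{t−2}} + 1 and B ∣ l^{2^{t−1}} + 1. Moreover, for any odd primes A and B with A ∣ l^{2^{t−2}} + 1 and B ∣ l^{2^{t−1}} + 1, one has: A ≠ B, the product A·B divides l^{2^t} − 1, A·B does not divide l^{2^{t−1}} + 1, and the multiplicative order of l modulo A·B equals 2^t. -/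
private lemma pow_sub_one_dvd_iff' (p l r : ℕ) (hl : 1 ≤ l) :
    p ∣ l ^ r - 1 ↔ (l : ZMod p) ^ r = 1 := by
  have h1 : 1 ≤ l ^ r := Nat.one_le_pow _ _ hl
  rw [← Nat.cast_pow, show (1 : ZMod p) = ((1 : ℕ) : ZMod p) by simp,
    ZMod.natCast_eq_natCast_iff]
  constructor
  · exact fun h => ((Nat.modEq_iff_dvd' h1).mpr h).symm
  · exact fun h => (Nat.modEq_iff_dvd' h1).mp h.symm

private lemma neg_one_of_dvd' (p l n : ℕ) [NeZero p] (hd : p ∣ l ^ n + 1) :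
    (l : ZMod p) ^ n = -1 := by
  have h0 : ((l ^ n + 1 : ℕ) : ZMod p) = 0 :=
    (ZMod.natCast_eq_zero_iff _ _).mpr hd
  push_cast at h0
  linear_combination h0

private lemma neg_one_ne_one' (p : ℕ) (hp : p.Prime) (hodd : Odd p) :
    (-1 : ZMod p) ≠ 1 := by
  haveI : NeZero p := ⟨hp.pos.ne'⟩
  intro h
  have h2 : ((2 : ℕ) : ZMod p) = 0 := by push_cast; linear_combination -h
  have hpd : p ∣ 2 := (ZMod.natCast_eq_zero_iff _ _).mp h2
  have hp2 : p = 2 := (Nat.prime_dvd_prime_iff_eq hp Nat.prime_two).mp hpd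
  rw [Nat.odd_iff] at hodd
  omega

private lemma order_eq' (l k p : ℕ) (hp : p.Prime) (hodd : Odd p)
    (hd : p ∣ l ^ 2 ^ k + 1) : orderOf (l : ZMod p) = 2 ^ (k + 1) := by
  haveI : Fact p.Prime := ⟨hp⟩
  haveI : NeZero p := ⟨hp.pos.ne'⟩
  have hneg : (l : ZMod p) ^ 2 ^ k = -1 := neg_one_of_dvd' p l _ hd
  have h1 : (l : ZMod p) ^ 2 ^ (k + 1) = 1 := by
    rw [pow_succ, pow_mul, hneg]; ring
  have hdvd : orderOf (l : ZMod p) ∣ 2 ^ (k + 1) := orderOf_dvd_of_pow_eq_one h1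
  have hndvd : ¬ orderOf (l : ZMod p) ∣ 2 ^ k := by
    intro h
    have h' := orderOf_dvd_iff_pow_eq_one.mp h
    rw [hneg] at h'
    exact neg_one_ne_one' p hp hodd h'
  obtain ⟨j, hjle, hj⟩ := (Nat.dvd_prime_pow Nat.prime_two).mp hdvd
  rw [hj] at hndvd ⊢
  congr 1
  by_contra hne'
  exact hndvd (pow_dvd_pow 2 (by omega))

private lemma exists_odd_prime_factor' (l k : ℕ) (hl : 2 ≤ l) (hk : 1 ≤ k) :
    ∃ p, p.Prime ∧ Odd p ∧ p ∣ l ^ 2 ^ k + 1 := by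
  set N := l ^ 2 ^ k + 1 with hN
  have h2k : 2 ≤ 2 ^ k := by
    calc 2 = 2 ^ 1 := by norm_num
    _ ≤ 2 ^ k := Nat.pow_le_pow_right (by norm_num) hk
  have hN5 : 5 ≤ N := by
    have : 2 ^ 2 ≤ l ^ 2 ^ k := by
      calc 2 ^ 2 ≤ l ^ 2 := Nat.pow_le_pow_left hl 2
      _ ≤ l ^ 2 ^ k := Nat.pow_le_pow_right (by omega) h2k
    omega
  have h4 : ¬ 4 ∣ N := by
    intro h4
    set s := l ^ 2 ^ (k - 1) with hs
    have hsq : l ^ 2 ^ k = s ^ 2 := by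
      rw [hs, ← pow_mul]
      congr 1
      rw [← pow_succ]
      congr 1
      omega
    rcases Nat.even_or_odd s with ⟨m, hm⟩ | ⟨m, hm⟩
    · have : s ^ 2 = 4 * (m * m) := by rw [hm]; ring
      omega
    · have : s ^ 2 = 4 * (m * m + m) + 1 := by rw [hm]; ring
      omega
  set M := N / 2 ^ N.factorization 2 with hM
  have hMdvd : M ∣ N := Nat.ordCompl_dvd N 2
  have hM2 : ¬ 2 ∣ M := Nat.not_dvd_ordCompl Nat.prime_two (by omega)
  have hM1 : M ≠ 1 := by
    intro h
    have hself := Nat.ordProj_mul_ordCompl_eq_self N 2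
    rw [← hM, h, mul_one] at hself
    set v := N.factorization 2 with hv
    have hv2 : 2 ≤ v := by
      by_contra hv2
      interval_cases v <;> omega
    have : 4 ∣ 2 ^ v := by
      have : (2:ℕ) ^ 2 ∣ 2 ^ v := pow_dvd_pow 2 hv2
      norm_num at this
      exact this
    omega
  refine ⟨M.minFac, Nat.minFac_prime hM1, ?_, (Nat.minFac_dvd M).trans hMdvd⟩
  refine (Nat.minFac_prime hM1).odd_of_ne_two ?_
  intro h
  exact hM2 (h ▸ Nat.minFac_dvd M)

/-- For integers `l ≥ 2` and `t ≥ 3`, there exist odd primes `A`, `B` with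
`A ∣ l ^ (2 ^ (t-2)) + 1` and `B ∣ l ^ (2 ^ (t-1)) + 1`; moreover any such odd primes `A`, `B`
satisfy `A ≠ B`, `A * B ∣ l ^ (2 ^ t) - 1`, `¬ A * B ∣ l ^ (2 ^ (t-1)) + 1`, and the
multiplicative order of `l` modulo `A * B` is `2 ^ t`. -/
theorem odd_prime_divisors_of_fermat_like (l t : ℕ) (hl : 2 ≤ l) (ht : 3 ≤ t) :
    (∃ A B : ℕ, A.Prime ∧ Odd A ∧ A ∣ l ^ (2 ^ (t - 2)) + 1 ∧
      B.Prime ∧ Odd B ∧ B ∣ l ^ (2 ^ (t - 1)) + 1) ∧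
    ∀ A B : ℕ, A.Prime → Odd A → A ∣ l ^ (2 ^ (t - 2)) + 1 →
      B.Prime → Odd B → B ∣ l ^ (2 ^ (t - 1)) + 1 →
      A ≠ B ∧ A * B ∣ l ^ (2 ^ t) - 1 ∧ ¬ A * B ∣ l ^ (2 ^ (t - 1)) + 1 ∧
        IsLeast {r : ℕ | 0 < r ∧ A * B ∣ l ^ r - 1} (2 ^ t) := by
  have hl1 : 1 ≤ l := by omega
  constructor
  · obtain ⟨A, hA⟩ := exists_odd_prime_factor' l (t - 2) hl (by omega)
    obtain ⟨B, hB⟩ := exists_odd_prime_factor' l (t - 1) hl (by omega)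
    exact ⟨A, B, hA.1, hA.2.1, hA.2.2, hB.1, hB.2.1, hB.2.2⟩
  intro A B hA hAodd hAdvd hB hBodd hBdvd
  haveI : NeZero A := ⟨hA.pos.ne'⟩
  haveI : NeZero B := ⟨hB.pos.ne'⟩
  have hordA : orderOf (l : ZMod A) = 2 ^ (t - 1) := by
    have := order_eq' l (t - 2) A hA hAodd hAdvd
    rwa [show t - 2 + 1 = t - 1 by omega] at this
  have hordB : orderOf (l : ZMod B) = 2 ^ t := by
    have := order_eq' l (t - 1) B hB hBodd hBdvd
    rwa [show t - 1 + 1 = t by omega] at this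
  have hAB : A ≠ B := by
    intro h
    subst h
    rw [hordA] at hordB
    have : t - 1 = t := Nat.pow_right_injective (le_refl 2) hordB
    omega
  have hcop : A.Coprime B := (Nat.coprime_primes hA hB).mpr hAB
  have hApow : (l : ZMod A) ^ 2 ^ t = 1 := by
    have : orderOf (l : ZMod A) ∣ 2 ^ t := by
      rw [hordA]; exact pow_dvd_pow 2 (by omega)
    exact orderOf_dvd_iff_pow_eq_one.mp this
  have hBpow : (l : ZMod B) ^ 2 ^ t = 1 := by
    rw [← hordB]; exact pow_orderOf_eq_one _
  have hABdvd : A * B ∣ l ^ 2 ^ t - 1 :=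
    hcop.mul_dvd_of_dvd_of_dvd
      ((pow_sub_one_dvd_iff' A l _ hl1).mpr hApow)
      ((pow_sub_one_dvd_iff' B l _ hl1).mpr hBpow)
  refine ⟨hAB, hABdvd, ?_, ⟨Nat.pow_pos (by norm_num), hABdvd⟩, ?_⟩
  · intro h
    have hA' : A ∣ l ^ 2 ^ (t - 1) + 1 := (dvd_mul_right A B).trans h
    have h1 : (l : ZMod A) ^ 2 ^ (t - 1) = -1 := neg_one_of_dvd' A l _ hA'
    have h2 : (l : ZMod A) ^ 2 ^ (t - 1) = 1 := by
      rw [← hordA]; exact pow_orderOf_eq_one _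
    rw [h1] at h2
    exact neg_one_ne_one' A hA hAodd h2
  · rintro r ⟨hr0, hrdvd⟩
    have hBr : B ∣ l ^ r - 1 := (dvd_mul_left B A).trans hrdvd
    have : (l : ZMod B) ^ r = 1 := (pow_sub_one_dvd_iff' B l r hl1).mp hBr
    have hord : 2 ^ t ∣ r := hordB ▸ orderOf_dvd_of_pow_eq_one this
    exact Nat.le_of_dvd hr0 hord
end

section
/- Let p be an odd prime, and let t ≥ 2 and l ≥ 2 be integers such that l^{p^{t−2}} ≡ 1 (mod p). Then Σ_{k=0}^{p−1} l^{k·p^{t−1}} ≡ p (mod p²); in particular, p² does not divide Σ_{k=0}^{p−1} l^{k·p^{t−1}}. -/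
/-- Let `p` be an odd prime, `t ≥ 2`, `l ≥ 2`, with
`l ^ (p ^ (t-2)) ≡ 1 (mod p)`. Then `∑_{k=0}^{p-1} l ^ (k * p ^ (t-1)) ≡ p (mod p²)`;
in particular `p²` does not divide this sum. -/
theorem cyclotomic_like_sum_mod_p_sq (p t l : ℕ) (hp : p.Prime) (hpodd : Odd p)
    (ht : 2 ≤ t) (hl : 2 ≤ l) (hcong : l ^ (p ^ (t - 2)) ≡ 1 [MOD p]) :
    (∑ k ∈ Finset.range p, l ^ (k * p ^ (t - 1))) ≡ p [MOD p ^ 2] ∧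
      ¬ p ^ 2 ∣ ∑ k ∈ Finset.range p, l ^ (k * p ^ (t - 1)) := by
  set a : ℤ := (l : ℤ) ^ (p ^ (t - 2)) with ha
  have hint : a ≡ 1 [ZMOD p] := by
    have h := Nat.ModEq.dvd hcong
    have : (p : ℤ) ∣ 1 - a := by push_cast at h ⊢; simpa [ha] using h
    exact (Int.modEq_iff_dvd.mpr this)
  have hdvd1 : (p : ℤ) ∣ a - 1 := (Int.ModEq.dvd hint.symm)
  have hdvd2 : (p : ℤ) ∣ (∑ i ∈ Finset.range p, a ^ i) := by
    have h1 : (p : ℤ) ∣ (∑ i ∈ Finset.range p, a ^ i) - p := by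
      have : (∑ i ∈ Finset.range p, a ^ i) - p = ∑ i ∈ Finset.range p, (a ^ i - 1) := by
        rw [Finset.sum_sub_distrib]; simp
      rw [this]
      refine Finset.dvd_sum fun i _ => ?_
      have h2 : a ^ i ≡ 1 [ZMOD p] := by simpa using hint.pow i
      exact dvd_sub_comm.mp (Int.ModEq.dvd h2)
    simpa using dvd_add h1 (dvd_refl (p:ℤ))
  have hkey : ((p : ℤ))^2 ∣ a ^ p - 1 := by
    have h : a ^ p - 1 = (∑ i ∈ Finset.range p, a ^ i) * (a - 1) := (geom_sum_mul a p).symm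
    rw [h, sq]
    exact mul_dvd_mul hdvd2 hdvd1
  have hte : t - 1 = (t - 2) + 1 := by omega
  have hap : ((l : ℤ)) ^ (p ^ (t - 1)) = a ^ p := by
    rw [ha, ← pow_mul, hte, pow_succ]
  have hterm : ∀ k, ((p:ℤ))^2 ∣ ((l:ℤ)) ^ (k * p ^ (t - 1)) - 1 := by
    intro k
    have h1 : ((p:ℤ))^2 ∣ ((l:ℤ)) ^ (p ^ (t-1)) - 1 := by rw [hap]; exact hkey
    have h2 : ((l:ℤ)) ^ (k * p ^ (t-1)) - 1
        = (∑ i ∈ Finset.range k, (((l:ℤ)) ^ (p ^ (t-1)))^i) * (((l:ℤ)) ^ (p ^ (t-1)) - 1) := by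
      rw [mul_comm k, pow_mul]
      exact (geom_sum_mul _ k).symm
    rw [h2]
    exact Dvd.dvd.mul_left h1 _
  have hmain : (∑ k ∈ Finset.range p, l ^ (k * p ^ (t - 1))) ≡ p [MOD p ^ 2] := by
    rw [Nat.modEq_iff_dvd]
    have : ((p:ℤ)) - (∑ k ∈ Finset.range p, ((l:ℤ)) ^ (k * p ^ (t - 1)))
        = - ∑ k ∈ Finset.range p, (((l:ℤ)) ^ (k * p ^ (t - 1)) - 1) := by
      rw [Finset.sum_sub_distrib]; simp
    push_cast
    rw [this]
    exact dvd_neg.mpr (Finset.dvd_sum fun k _ => hterm k)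
  refine ⟨hmain, ?_⟩
  intro hdvd
  have h0 : p % p ^ 2 = 0 := by
    have h1 := hmain.symm
    unfold Nat.ModEq at h1
    rw [h1]
    exact Nat.mod_eq_zero_of_dvd hdvd
  have hpp : p ^ 2 ∣ p := Nat.dvd_of_mod_eq_zero h0
  have hlt : p < p ^ 2 := by nlinarith [hp.two_le]
  exact absurd (Nat.le_of_dvd hp.pos hpp) (not_le.mpr hlt)
end

section
/- Let n > 2 be an odd integer and let N be an odd integer with N > 100n + 100. Let B ⊆ ℤ/Nℤ be the image of the set of integers {1, 2, N−3} ∪ {(N−n+4)/2, (N−n+6)/2, …, (N+n−4)/2}, where the second set consists of the n−3 consecutive integers from (N−n+4)/2 to (N+n−4)/2 (and is empty when n = 3). If α ∈ (ℤ/Nℤ)^× is a unit with α·B = B (as subsets of ℤ/Nℤ), then α = 1. -/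
/-- Let `n > 2` be odd and `N` odd with `N > 100n + 100`. Let
`B ⊆ ℤ/Nℤ` be the image of `{1, 2, N-3} ∪ {(N-n+4)/2, (N-n+6)/2, …, (N+n-4)/2}`,
the latter being the `n - 3` consecutive integers starting at `(N-n+4)/2`.
If a unit `α` of `ℤ/Nℤ` satisfies `α • B = B`, then `α = 1`. -/
theorem unit_fixing_b_set_is_one_odd (n N : ℕ) (hn : Odd n) (hn2 : 2 < n)
    (hN : Odd N) (hNn : 100 * n + 100 < N)
    (B : Set (ZMod N))
    (hB : B = (fun k : ℕ => (k : ZMod N)) ''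
      ({1, 2, N - 3} ∪ (fun i : ℕ => (N - n + 4) / 2 + i) '' {i : ℕ | i < n - 3}))
    (α : (ZMod N)ˣ) (hα : (fun x : ZMod N => (α : ZMod N) * x) '' B = B) :
    α = 1 := by
  obtain ⟨p, hp⟩ := hN
  obtain ⟨q, hq⟩ := hn
  haveI : NeZero N := ⟨by omega⟩
  set c := (N - n + 4) / 2 with hc
  have h2c : 2 * c = N - n + 4 := by omega
  have hforward : ∀ x ∈ B, (α : ZMod N) * x ∈ B := by
    intro x hx
    rw [← hα]; exact ⟨x, hx, rfl⟩
  have hmodN : ∀ a b k : ℕ, a = N * k + b → ((a : ℕ) : ZMod N) = ((b : ℕ) : ZMod N) := by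
    intro a b k h
    subst h
    push_cast [ZMod.natCast_self]
    ring
  have hmemB : ∀ v : ℕ, v < N → ((v : ℕ) : ZMod N) ∈ B →
      v = 1 ∨ v = 2 ∨ v = N - 3 ∨ ∃ i, i < n - 3 ∧ v = c + i := by
    intro v hv hmem
    rw [hB] at hmem
    obtain ⟨k, hkS, hkv⟩ := hmem
    simp only [Set.mem_union, Set.mem_insert_iff, Set.mem_singleton_iff, Set.mem_image,
      Set.mem_setOf_eq] at hkS
    have hklt : k < N := by
      rcases hkS with (rfl | rfl | rfl) | ⟨i, hi, rfl⟩ <;> omega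
    have hkeq : k = v := by
      have h := congrArg ZMod.val hkv
      rwa [ZMod.val_natCast_of_lt hklt, ZMod.val_natCast_of_lt hv] at h
    subst hkeq
    rcases hkS with (rfl | rfl | rfl) | ⟨i, hi, h⟩
    · exact Or.inl rfl
    · exact Or.inr (Or.inl rfl)
    · exact Or.inr (Or.inr (Or.inl rfl))
    · exact Or.inr (Or.inr (Or.inr ⟨i, hi, h.symm⟩))
  have hBin : ∀ k : ℕ, (k = 1 ∨ k = 2 ∨ k = N - 3 ∨ ∃ i, i < n - 3 ∧ k = c + i) →
      ((k : ℕ) : ZMod N) ∈ B := by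
    intro k hk
    rw [hB]
    refine ⟨k, ?_, rfl⟩
    rcases hk with rfl | rfl | rfl | ⟨i, hi, rfl⟩
    · exact Or.inl (by simp)
    · exact Or.inl (by simp)
    · exact Or.inl (by simp)
    · exact Or.inr ⟨i, hi, rfl⟩
  -- α itself is in B
  have h1B : ((1 : ℕ) : ZMod N) ∈ B := hBin 1 (Or.inl rfl)
  have hαB : (((α : ZMod N).val : ℕ) : ZMod N) ∈ B := by
    have h := hforward _ h1B
    rw [Nat.cast_one, mul_one] at h
    rwa [ZMod.natCast_rightInverse (α : ZMod N)]
  have hvalcast : (((α : ZMod N).val : ℕ) : ZMod N) = (α : ZMod N) :=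
    ZMod.natCast_rightInverse (α : ZMod N)
  obtain h1 | h2 | h3 | ⟨i, hi, hci⟩ := hmemB _ (ZMod.val_lt _) hαB
  · -- α = 1
    have : (α : ZMod N) = 1 := by rw [← hvalcast, h1, Nat.cast_one]
    exact Units.ext this
  · -- α = 2 : then α * (N-3) = N-6 ∈ B, contradiction
    exfalso
    have hA : (α : ZMod N) = ((2 : ℕ) : ZMod N) := by rw [← hvalcast, h2]
    have hN3 : ((N - 3 : ℕ) : ZMod N) ∈ B := hBin _ (Or.inr (Or.inr (Or.inl rfl)))
    have hstep := hforward _ hN3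
    rw [hA, ← Nat.cast_mul] at hstep
    rw [hmodN (2 * (N - 3)) (N - 6) 1 (by omega)] at hstep
    rcases hmemB (N - 6) (by omega) hstep with h | h | h | ⟨i', hi', h⟩ <;> omega
  · -- α = N - 3 : then α * 2 = N-6 ∈ B, contradiction
    exfalso
    have hA : (α : ZMod N) = ((N - 3 : ℕ) : ZMod N) := by rw [← hvalcast, h3]
    have h2Bm : ((2 : ℕ) : ZMod N) ∈ B := hBin 2 (Or.inr (Or.inl rfl))
    have hstep := hforward _ h2Bm
    rw [hA, ← Nat.cast_mul] at hstep
    rw [hmodN ((N - 3) * 2) (N - 6) 1 (by omega)] at hstep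
    rcases hmemB (N - 6) (by omega) hstep with h | h | h | ⟨i', hi', h⟩ <;> omega
  · -- α = c + i, i < n - 3
    exfalso
    have hn5 : 5 ≤ n := by omega
    have hA : (α : ZMod N) = ((c + i : ℕ) : ZMod N) := by rw [← hvalcast, hci]
    have h2Bm : ((2 : ℕ) : ZMod N) ∈ B := hBin 2 (Or.inr (Or.inl rfl))
    have hstep := hforward _ h2Bm
    rw [hA, ← Nat.cast_mul] at hstep
    -- show 2*(c+i) = N+1 or N-3
    have hkey : 2 * (c + i) = N + 1 ∨ 2 * (c + i) = N - 3 := by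
      by_cases hbig : n ≤ 2 * i + 3
      · -- (c+i)*2 = N + d with d = 2i+4-n
        left
        rw [hmodN ((c + i) * 2) (2 * i + 4 - n) 1 (by omega)] at hstep
        rcases hmemB (2 * i + 4 - n) (by omega) hstep with h | h | h | ⟨i', hi', h⟩ <;> omega
      · -- (c+i)*2 = N - e with e = n-4-2i
        right
        rw [show (c + i) * 2 = N - (n - 4 - 2 * i) from by omega] at hstep
        rcases hmemB (N - (n - 4 - 2 * i)) (by omega) hstep with h | h | h | ⟨i', hi', h⟩ <;> omega
    -- the midpoint-ish element x with 2x = N+1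
    set i0 := (n - 3) / 2 with hi0
    have hx : 2 * (c + i0) = N + 1 := by omega
    have hxB : ((c + i0 : ℕ) : ZMod N) ∈ B := hBin _ (Or.inr (Or.inr (Or.inr ⟨i0, by omega, rfl⟩)))
    have hstep2 := hforward _ hxB
    rw [hA, ← Nat.cast_mul] at hstep2
    have finish : ∀ y Q : ℕ, (c + i) * (c + i0) = N * Q + y → 2 < y → y < N - 3 →
        (4 * y < 2 * N - 2 * n + 8 ∨ 4 * y > 2 * N + 2 * n - 8) → False := by
      intro y Q hEq hy1 hy2 hy3
      rw [hmodN _ y Q hEq] at hstep2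
      rcases hmemB y (by omega) hstep2 with h | h | h | ⟨i', hi', h⟩ <;> omega
    rcases Nat.even_or_odd p with ⟨t, ht⟩ | ⟨t, ht⟩
    · -- N = 4t+1
      have hNt : N = 4 * t + 1 := by omega
      have ht100 : 100 ≤ t := by omega
      rcases hkey with hm | hm
      · -- m = 2t+1, x = 2t+1, y = 3t+1, Q = t
        refine finish (3 * t + 1) t ?_ (by omega) (by omega) (by omega)
        rw [show c + i = 2 * t + 1 from by omega, show c + i0 = 2 * t + 1 from by omega, hNt]
        ring
      · -- m = 2t-1 : use s = t-1 : m = 2s+1, x = 2s+3, N = 4s+5, y = 3s+3, Q = s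
        obtain ⟨s, hs⟩ : ∃ s, t = s + 1 := ⟨t - 1, by omega⟩
        refine finish (3 * s + 3) s ?_ (by omega) (by omega) (by omega)
        rw [show c + i = 2 * s + 1 from by omega, show c + i0 = 2 * s + 3 from by omega,
          show N = 4 * s + 5 from by omega]
        ring
    · -- N = 4t+3
      have hNt : N = 4 * t + 3 := by omega
      have ht100 : 100 ≤ t := by omega
      rcases hkey with hm | hm
      · -- m = x = 2t+2, y = t+1, Q = t+1
        refine finish (t + 1) (t + 1) ?_ (by omega) (by omega) (by omega)
        rw [show c + i = 2 * t + 2 from by omega, show c + i0 = 2 * t + 2 from by omega, hNt]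
        ring
      · -- m = 2t, x = 2t+2, y = t, Q = t
        refine finish t t ?_ (by omega) (by omega) (by omega)
        rw [show c + i = 2 * t from by omega, show c + i0 = 2 * t + 2 from by omega, hNt]
        ring
end

section
/- Let n > 2 be an even integer and let N be an odd integer with N > 100n + 100. Let B ⊆ ℤ/Nℤ be the image of the set of integers {1, 2, 3, N−6} ∪ {(N−n+5)/2, (N−n+7)/2, …, (N+n−5)/2}, where the second set consists of the n−4 consecutive integers from (N−n+5)/2 to (N+n−5)/2 (and is empty when n = 4). If α ∈ (ℤ/Nℤ)^× is a unit with α·B = B (as subsets of ℤ/Nℤ), then α = 1. -/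
/-- Let `n > 2` be even and `N` odd with `N > 100n + 100`. Let
`B ⊆ ℤ/Nℤ` be the image of `{1, 2, 3, N-6} ∪ {(N-n+5)/2, (N-n+7)/2, …, (N+n-5)/2}`,
the latter being the `n - 4` consecutive integers starting at `(N-n+5)/2`.
If a unit `α` of `ℤ/Nℤ` satisfies `α • B = B`, then `α = 1`. -/
theorem unit_fixing_b_set_is_one_even (n N : ℕ) (hn : Even n) (hn2 : 2 < n)
    (hN : Odd N) (hNn : 100 * n + 100 < N)
    (B : Set (ZMod N))
    (hB : B = (fun k : ℕ => (k : ZMod N)) ''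
      ({1, 2, 3, N - 6} ∪ (fun i : ℕ => (N - n + 5) / 2 + i) '' {i : ℕ | i < n - 4}))
    (α : (ZMod N)ˣ) (hα : (fun x : ZMod N => (α : ZMod N) * x) '' B = B) :
    α = 1 := by
  obtain ⟨r, hr⟩ := hn
  obtain ⟨s, hs⟩ := hN
  haveI : NeZero N := ⟨by omega⟩
  set m := (N - n + 5) / 2 with hm
  have hm2 : 2 * m + n = N + 5 := by omega
  have inj : ∀ a b : ℕ, a < N → b < N → ((a : ZMod N) = (b : ZMod N)) → a = b := by
    intro a b ha hb h
    have := congrArg ZMod.val h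
    rwa [ZMod.val_cast_of_lt ha, ZMod.val_cast_of_lt hb] at this
  have hsub : ∀ c : ℕ, c ≤ N → ((N - c : ℕ) : ZMod N) = -(c : ZMod N) := by
    intro c hc
    rw [Nat.cast_sub hc, ZMod.natCast_self]
    ring
  have memB : ∀ x : ZMod N, x ∈ B →
      (x = ((1 : ℕ) : ZMod N) ∨ x = ((2 : ℕ) : ZMod N) ∨ x = ((3 : ℕ) : ZMod N) ∨
        x = ((N - 6 : ℕ) : ZMod N) ∨ ∃ i, i < n - 4 ∧ x = ((m + i : ℕ) : ZMod N)) := by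
    intro x hx
    rw [hB] at hx
    obtain ⟨k, hk, rfl⟩ := hx
    rcases hk with hk | hk
    · simp only [Set.mem_insert_iff, Set.mem_singleton_iff] at hk
      rcases hk with rfl | rfl | rfl | rfl
      · exact Or.inl rfl
      · exact Or.inr (Or.inl rfl)
      · exact Or.inr (Or.inr (Or.inl rfl))
      · exact Or.inr (Or.inr (Or.inr (Or.inl rfl)))
    · obtain ⟨i, hi, rfl⟩ := hk
      exact Or.inr (Or.inr (Or.inr (Or.inr ⟨i, hi, rfl⟩)))
  have hgen : ∀ k : ℕ, k ∈ ({1, 2, 3, N - 6} : Set ℕ) → ((k : ZMod N)) ∈ B := by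
    intro k hk
    rw [hB]
    exact ⟨k, Or.inl hk, rfl⟩
  have h1B : ((1 : ℕ) : ZMod N) ∈ B := hgen 1 (by simp)
  have h2B : ((2 : ℕ) : ZMod N) ∈ B := hgen 2 (by simp)
  have h6B : ((N - 6 : ℕ) : ZMod N) ∈ B := hgen (N - 6) (by simp)
  have key : ∀ x ∈ B, (α : ZMod N) * x ∈ B := by
    intro x hx
    rw [← hα]
    exact ⟨x, hx, rfl⟩
  have hα1 := key _ h1B
  rw [Nat.cast_one, mul_one] at hα1
  rcases memB _ hα1 with h | h | h | h | ⟨i, hi, h⟩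
  · exact Units.ext (by rw [h, Nat.cast_one, Units.val_one])
  · -- α = 2
    have hc := key _ h6B
    rw [h] at hc
    have e : ((2 : ℕ) : ZMod N) * ((N - 6 : ℕ) : ZMod N) = ((N - 12 : ℕ) : ZMod N) := by
      rw [hsub 6 (by omega), hsub 12 (by omega)]
      push_cast
      ring
    rw [e] at hc
    rcases memB _ hc with h' | h' | h' | h' | ⟨j, hj, h'⟩ <;>
      · have := inj _ _ (by omega) (by omega) h'
        omega
  · -- α = 3
    have hc := key _ h6B
    rw [h] at hc
    have e : ((3 : ℕ) : ZMod N) * ((N - 6 : ℕ) : ZMod N) = ((N - 18 : ℕ) : ZMod N) := by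
      rw [hsub 6 (by omega), hsub 18 (by omega)]
      push_cast
      ring
    rw [e] at hc
    rcases memB _ hc with h' | h' | h' | h' | ⟨j, hj, h'⟩ <;>
      · have := inj _ _ (by omega) (by omega) h'
        omega
  · -- α = N - 6
    have hc := key _ h6B
    rw [h] at hc
    have e : ((N - 6 : ℕ) : ZMod N) * ((N - 6 : ℕ) : ZMod N) = ((36 : ℕ) : ZMod N) := by
      rw [hsub 6 (by omega)]
      push_cast
      ring
    rw [e] at hc
    rcases memB _ hc with h' | h' | h' | h' | ⟨j, hj, h'⟩ <;>
      · have := inj _ _ (by omega) (by omega) h'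
        omega
  · -- α = m + i, a middle element
    have hc2 := key _ h2B
    rw [h] at hc2
    have e2 : ((m + i : ℕ) : ZMod N) * ((2 : ℕ) : ZMod N) = ((2 * (m + i) : ℕ) : ZMod N) := by
      push_cast
      ring
    rw [e2] at hc2
    by_cases hcase : n ≤ 2 * i + 5
    · -- 2(m+i) = N + t with t = 2i+5-n odd, 1 ≤ t ≤ n-5
      have ht : 2 * (m + i) = N + (2 * i + 5 - n) := by omega
      have e3 : ((2 * (m + i) : ℕ) : ZMod N) = ((2 * i + 5 - n : ℕ) : ZMod N) := by
        rw [ht, Nat.cast_add, ZMod.natCast_self, zero_add]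
      rw [e3] at hc2
      have hx2 : (2 : ZMod N) * ((m + i : ℕ) : ZMod N) = ((2 * (m + i) : ℕ) : ZMod N) := by
        push_cast
        ring
      rcases memB _ hc2 with h' | h' | h' | h' | ⟨j, hj, h'⟩
      · -- t = 1 : 2α = 1, so α(N-6) = -3 = N-3 must be in B
        have ht1 := inj _ _ (by omega) (by omega) h'
        have h21 : 2 * (m + i) = N + 1 := by omega
        have hxx : (2 : ZMod N) * ((m + i : ℕ) : ZMod N) = 1 := by
          rw [hx2, h21, Nat.cast_add, ZMod.natCast_self, zero_add, Nat.cast_one]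
        push_cast at hxx
        have hc6 := key _ h6B
        rw [h] at hc6
        have e6 : ((m + i : ℕ) : ZMod N) * ((N - 6 : ℕ) : ZMod N) =
            ((N - 3 : ℕ) : ZMod N) := by
          rw [hsub 6 (by omega), hsub 3 (by omega)]
          push_cast
          linear_combination (-(3 : ZMod N)) * hxx
        rw [e6] at hc6
        rcases memB _ hc6 with h'' | h'' | h'' | h'' | ⟨j, hj, h''⟩ <;>
          · have := inj _ _ (by omega) (by omega) h''
            omega
      · have := inj _ _ (by omega) (by omega) h'
        omega
      · -- t = 3 : 2α = 3, so α(N-6) = -9 = N-9 must be in B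
        have ht3 := inj _ _ (by omega) (by omega) h'
        have h23 : 2 * (m + i) = N + 3 := by omega
        have hxx : (2 : ZMod N) * ((m + i : ℕ) : ZMod N) = 3 := by
          rw [hx2, h23, Nat.cast_add, ZMod.natCast_self, zero_add]
          push_cast
          ring
        push_cast at hxx
        have hc6 := key _ h6B
        rw [h] at hc6
        have e6 : ((m + i : ℕ) : ZMod N) * ((N - 6 : ℕ) : ZMod N) =
            ((N - 9 : ℕ) : ZMod N) := by
          rw [hsub 6 (by omega), hsub 9 (by omega)]
          push_cast
          linear_combination (-(3 : ZMod N)) * hxx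
        rw [e6] at hc6
        rcases memB _ hc6 with h'' | h'' | h'' | h'' | ⟨j, hj, h''⟩ <;>
          · have := inj _ _ (by omega) (by omega) h''
            omega
      · have := inj _ _ (by omega) (by omega) h'
        omega
      · have := inj _ _ (by omega) (by omega) h'
        omega
    · -- 2(m+i) = N - s with s = n-5-2i odd, 1 ≤ s ≤ n-5
      have hsc : 2 * (m + i) = N - (n - 5 - 2 * i) := by omega
      rw [hsc] at hc2
      rcases memB _ hc2 with h' | h' | h' | h' | ⟨j, hj, h'⟩ <;>
        · have := inj _ _ (by omega) (by omega) h'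
          omega
end

section
/- Let F be a finite field of cardinality q, let ψ: F → ℂ be a nontrivial additive character, let N ≥ 3 be an odd integer, and let χ be a ℂ-valued multiplicative character of F of order exactly N (so N divides q − 1). Then ∏_{s=1}^{N−1} g(χ^s, ψ) = q^{(N−1)/2} in ℂ. -/
/-- Let `F` be a finite field with `q` elements, `ψ` a nontrivial additive
character of `F` with values in `ℂ`, `N ≥ 3` an odd integer and `χ` a multiplicative character
of `F` of order exactly `N`. Then `∏_{s=1}^{N-1} g(χ^s, ψ) = q ^ ((N-1)/2)`. -/
theorem prod_gaussSum_pow_eq_card_pow (F : Type*) [Field F] [Fintype F]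
    (ψ : AddChar F ℂ) (hψ : ψ ≠ 1)
    (N : ℕ) (hN : 3 ≤ N) (hNodd : Odd N)
    (χ : MulChar F ℂ) (hχ : orderOf χ = N) :
    ∏ s ∈ Finset.Icc 1 (N - 1), gaussSum (χ ^ s) ψ =
      (Fintype.card F : ℂ) ^ ((N - 1) / 2) := by
  have hψp : ψ.IsPrimitive := AddChar.IsPrimitive.of_ne_one hψ
  set m := (N - 1) / 2 with hm
  have hNm : N - 1 = 2 * m := by
    obtain ⟨k, hk⟩ := hNodd; omega
  have hχN : χ ^ N = 1 := by rw [← hχ]; exact pow_orderOf_eq_one χ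
  -- χ(-1) = 1
  have hneg : χ (-1) = 1 := by
    have h2 : χ (-1) ^ 2 = 1 := by
      rw [sq, ← map_mul]; simp
    have hNe : χ (-1) ^ N = 1 := by
      rw [← MulChar.pow_apply' χ (by omega : N ≠ 0), hχN, MulChar.one_apply (by simp)]
    have : χ (-1) ^ (N - 1) = 1 := by
      rw [hNm, pow_mul, h2, one_pow]
    calc χ (-1) = χ (-1) ^ (N - 1) * χ (-1) := by rw [this, one_mul]
      _ = χ (-1) ^ N := by rw [← pow_succ]; congr 1; omega
      _ = 1 := hNe
  -- key pairing lemma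
  have key : ∀ s ∈ Finset.Icc 1 (N - 1),
      gaussSum (χ ^ s) ψ * gaussSum (χ ^ (N - s)) ψ = (Fintype.card F : ℂ) := by
    intro s hs
    simp only [Finset.mem_Icc] at hs
    have hs1 : χ ^ s ≠ 1 := by
      intro h
      have := orderOf_dvd_of_pow_eq_one h
      rw [hχ] at this
      have := Nat.le_of_dvd (by omega) this
      omega
    have hinv : χ ^ (N - s) = (χ ^ s)⁻¹ := by
      rw [eq_inv_iff_mul_eq_one, ← pow_add]
      rw [show N - s + s = N by omega, hχN]
    have hnegs : (χ ^ (N - s)) (-1) = 1 := by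
      rw [MulChar.pow_apply' χ (by omega : N - s ≠ 0), hneg, one_pow]
    have := mul_gaussSum_inv_eq_gaussSum (χ ^ (N - s)) ψ
    rw [hnegs, one_mul] at this
    rw [← this, hinv, gaussSum_mul_gaussSum_eq_card hs1 hψp]
  -- split product
  have hIcc : Finset.Icc 1 (N - 1) = Finset.Ioc 0 (N - 1) := by
    ext x; simp; omega
  rw [hIcc, ← Finset.prod_Ioc_consecutive _ (Nat.zero_le m) (by omega : m ≤ N - 1)]
  have hre : ∏ s ∈ Finset.Ioc m (N - 1), gaussSum (χ ^ s) ψ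
      = ∏ s ∈ Finset.Ioc 0 m, gaussSum (χ ^ (N - s)) ψ := by
    apply Finset.prod_nbij' (fun s => N - s) (fun s => N - s)
    · intro a ha; simp only [Finset.mem_Ioc] at *; omega
    · intro a ha; simp only [Finset.mem_Ioc] at *; omega
    · intro a ha; simp only [Finset.mem_Ioc] at ha; omega
    · intro a ha; simp only [Finset.mem_Ioc] at ha; omega
    · intro a ha; simp only [Finset.mem_Ioc] at ha
      rw [show N - (N - a) = a by omega]
  rw [hre, ← Finset.prod_mul_distrib]
  have hmem : ∀ s ∈ Finset.Ioc 0 m, s ∈ Finset.Icc 1 (N - 1) := by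
    intro s hs
    simp only [Finset.mem_Ioc] at hs
    simp only [Finset.mem_Icc]
    omega
  rw [Finset.prod_congr rfl (fun s hs => key s (hmem s hs))]
  rw [Finset.prod_const, Nat.card_Ioc, Nat.sub_zero]
end

section
/- Let F be a finite field of cardinality q, let ψ: F → ℂ be a nontrivial additive character, let N ≥ 3 be an odd integer, let χ be a ℂ-valued multiplicative character of F of order exactly N, let n ≥ 2 be an integer, and let b_1, …, b_n be pairwise distinct nonzero elements of ℤ/Nℤ. Then ∏_{j=1}^{n} ∏_{s ∈ ℤ/Nℤ, s ∉ {−b_1, …, −b_n}} g(χ^{s + b_j}, ψ) = q^{n(N−n)/2} in ℂ. -/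
/-- Let `F` be a finite field with `q` elements, `ψ` a nontrivial additive
character of `F` with values in `ℂ`, `N ≥ 3` odd, `χ` a multiplicative character of `F` of
order exactly `N`, `n ≥ 2`, and `b 1, …, b n` pairwise distinct nonzero elements of `ℤ/Nℤ`.
Then `∏_{j=1}^{n} ∏_{s ∉ {-b 1, …, -b n}} g(χ^(s + b j), ψ) = q ^ (n(N-n)/2)`. -/
theorem prod_prod_gaussSum_eq_card_pow (F : Type*) [Field F] [Fintype F]
    (ψ : AddChar F ℂ) (hψ : ψ ≠ 1)
    (N : ℕ) [NeZero N] (hN : 3 ≤ N) (hNodd : Odd N)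
    (χ : MulChar F ℂ) (hχ : orderOf χ = N)
    (n : ℕ) (hn : 2 ≤ n) (b : Fin n → ZMod N) (hbinj : Function.Injective b)
    (hbne : ∀ j, b j ≠ 0) :
    ∏ j : Fin n, ∏ s ∈ (Finset.univ \ Finset.image (fun j => -(b j)) Finset.univ),
        gaussSum (χ ^ (s + b j).val) ψ =
      (Fintype.card F : ℂ) ^ (n * (N - n) / 2) := by
  classical
  set q : ℕ := Fintype.card F with hq
  set S : Finset (ZMod N) := Finset.univ \ Finset.image (fun j => -(b j)) Finset.univ with hS
  set f : ZMod N → ℂ := fun e => gaussSum (χ ^ e.val) ψ with hf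
  set m : ZMod N → ℕ := fun e =>
    (Finset.univ.filter (fun j : Fin n => e - b j ∈ S)).card with hm
  set B : Finset (ZMod N) := Finset.image b Finset.univ with hB
  have hmemS : ∀ x : ZMod N, x ∈ S ↔ ∀ i, x ≠ -(b i) := by
    intro x
    simp [hS, eq_comm]
  -- membership characterization : e - b j ∈ S ↔ b j - e ∉ B
  have hcond : ∀ (e : ZMod N) (j : Fin n), (e - b j ∈ S) ↔ b j - e ∉ B := by
    intro e j
    rw [hmemS]
    simp only [hB, Finset.mem_image, Finset.mem_univ, true_and, not_exists]
    constructor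
    · intro h i hi
      exact h i (by linear_combination hi)
    · intro h i hne
      exact h i (by linear_combination hne)
  -- Step 1: collect by exponent
  have step1 : ∏ j : Fin n, ∏ s ∈ S, f (s + b j) = ∏ e : ZMod N, f e ^ m e := by
    have h1 : ∀ j : Fin n, ∏ s ∈ S, f (s + b j)
        = ∏ e : ZMod N, (if e - b j ∈ S then f e else 1) := by
      intro j
      rw [← Finset.prod_filter]
      refine Finset.prod_nbij' (fun s => s + b j) (fun e => e - b j) ?_ ?_ ?_ ?_ ?_
      · intro a ha; simp [Finset.mem_filter, ha]
      · intro a ha; simpa using (Finset.mem_filter.mp ha).2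
      · intro a _; ring
      · intro a _; ring
      · intro a _; rfl
    rw [Finset.prod_congr rfl (fun j _ => h1 j), Finset.prod_comm]
    refine Finset.prod_congr rfl fun e _ => ?_
    rw [← Finset.prod_filter, Finset.prod_const, hm]
  -- m 0 = 0
  have hm0 : m 0 = 0 := by
    rw [hm]
    simp only [Finset.card_eq_zero, Finset.filter_eq_empty_iff]
    intro j _
    rw [hcond]
    simp [hB]
  -- m e = m (-e)
  have hmneg : ∀ e : ZMod N, m e = m (-e) := by
    intro e
    have key : ∀ (c : ZMod N), m c = B.card - (B.filter (fun x => x - c ∈ B)).card := by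
      intro c
      have h1 : m c = (B.filter (fun x => x - c ∉ B)).card := by
        rw [hm]
        refine Finset.card_bij (fun j _ => b j) ?_ ?_ ?_
        · intro j hj
          simp only [Finset.mem_filter] at hj ⊢
          exact ⟨by simp [hB], (hcond c j).mp hj.2⟩
        · intro j _ i _ h; exact hbinj h
        · intro x hx
          rw [Finset.mem_filter] at hx
          obtain ⟨hx1, hx2⟩ := hx
          rw [hB, Finset.mem_image] at hx1
          obtain ⟨j, _, hj⟩ := hx1
          refine ⟨j, ?_, hj⟩
          simp only [Finset.mem_filter, Finset.mem_univ, true_and]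
          rw [hcond, hj]
          exact hx2
      have h3 : (B.filter (fun x => x - c ∈ B)).card
          + (B.filter (fun x => x - c ∉ B)).card = B.card :=
        Finset.card_filter_add_card_filter_not (fun x => x - c ∈ B)
      omega
    rw [key e, key (-e)]
    congr 1
    refine Finset.card_nbij' (fun x => x - e) (fun x => x + e) ?_ ?_ ?_ ?_
    · intro x hx
      simp only [Finset.mem_coe, Finset.mem_filter, sub_neg_eq_add] at hx ⊢
      exact ⟨hx.2, by rw [show x - e + e = x by ring]; exact hx.1⟩
    · intro x hx
      simp only [Finset.mem_coe, Finset.mem_filter, sub_neg_eq_add] at hx ⊢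
      exact ⟨hx.2, by rw [show x + e - e = x by ring]; exact hx.1⟩
    · intro x _; ring
    · intro x _; ring
  -- sum of m
  have hcardB : B.card = n := by
    rw [hB, Finset.card_image_of_injective _ hbinj, Finset.card_univ, Fintype.card_fin]
  have hnN : n < N := by
    have hBsub : B ⊆ Finset.univ \ {0} := by
      intro x hx
      simp only [hB, Finset.mem_image] at hx
      obtain ⟨j, _, hj⟩ := hx
      simp [← hj, hbne j]
    have := Finset.card_le_card hBsub
    rw [hcardB] at this
    have h2 : (Finset.univ \ {(0 : ZMod N)}).card = N - 1 := by
      rw [Finset.card_sdiff_of_subset (by simp), Finset.card_univ, ZMod.card, Finset.card_singleton]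
    omega
  have hcardS : S.card = N - n := by
    rw [hS, Finset.card_sdiff_of_subset (Finset.subset_univ _), Finset.card_univ, ZMod.card,
      Finset.card_image_of_injective _ (fun i j h => hbinj (neg_injective h)),
      Finset.card_univ, Fintype.card_fin]
  have hsum : ∑ e : ZMod N, m e = n * (N - n) := by
    have h1 : ∑ e : ZMod N, m e
        = ∑ j : Fin n, ∑ e : ZMod N, (if e - b j ∈ S then 1 else 0) := by
      rw [← Finset.sum_comm]
      exact Finset.sum_congr rfl fun e _ => by simp only [hm]; rw [Finset.card_filter]
    have h2 : ∀ j : Fin n, (∑ e : ZMod N, if e - b j ∈ S then 1 else 0) = N - n := by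
      intro j
      rw [← Finset.card_filter, ← hcardS]
      refine Finset.card_nbij' (fun e => e - b j) (fun s => s + b j) ?_ ?_ ?_ ?_
      · intro x hx; exact (Finset.mem_filter.mp hx).2
      · intro x hx; simp only [Finset.mem_coe, Finset.mem_filter, Finset.mem_univ, true_and]
        rw [show x + b j - b j = x by ring]; exact hx
      · intro x _; ring
      · intro x _; ring
    rw [h1, Finset.sum_congr rfl fun j _ => h2 j, Finset.sum_const, Finset.card_univ,
      Fintype.card_fin, smul_eq_mul]
  -- χ (-1) = 1
  have hχN : χ ^ N = 1 := by rw [← hχ]; exact pow_orderOf_eq_one χ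
  have hchineg : χ (-1) = 1 := by
    have h2 : χ (-1) * χ (-1) = 1 := by
      rw [← map_mul]; norm_num
    have hNpow : χ (-1) ^ N = 1 := by
      have : (χ ^ N) (-1) = 1 := by rw [hχN]; exact MulChar.one_apply_coe (-1 : Fˣ)
      rwa [MulChar.pow_apply' χ (NeZero.ne N) (-1)] at this
    obtain ⟨k, hk⟩ := hNodd
    calc χ (-1) = (χ (-1) * χ (-1)) ^ k * χ (-1) := by rw [h2]; ring
    _ = χ (-1) ^ N := by rw [hk]; ring
    _ = 1 := hNpow
  -- key Gauss sum identity
  have hprim : ψ.IsPrimitive := AddChar.IsPrimitive.of_ne_one hψ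
  have hkey : ∀ e : ZMod N, e ≠ 0 → f e * f (-e) = (q : ℂ) := by
    intro e he
    have hval : 0 < e.val := by
      rcases Nat.eq_zero_or_pos e.val with h | h
      · exact absurd ((ZMod.val_eq_zero e).mp h) he
      · exact h
    have hvalN : e.val < N := e.val_lt
    have hnegval : (-e).val = N - e.val := by
      rw [ZMod.neg_val, if_neg he]
    have hne1 : χ ^ e.val ≠ 1 := by
      intro h
      have := orderOf_dvd_of_pow_eq_one h
      rw [hχ] at this
      exact absurd (Nat.le_of_dvd hval this) (by omega)
    have hinv : χ ^ (-e).val = (χ ^ e.val)⁻¹ := by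
      rw [eq_inv_iff_mul_eq_one, hnegval, ← pow_add]
      rw [show N - e.val + e.val = N by omega]
      exact hχN
    have hinvneg : (χ ^ e.val)⁻¹ (-1) = 1 := by
      rw [← hinv, hnegval, MulChar.pow_apply' χ (by omega : N - e.val ≠ 0) (-1), hchineg, one_pow]
    calc f e * f (-e) = gaussSum (χ ^ e.val) ψ * gaussSum (χ ^ e.val)⁻¹ ψ := by
          rw [hf]; dsimp only; rw [hinv]
    _ = gaussSum (χ ^ e.val) ψ * ((χ ^ e.val)⁻¹ (-1) * gaussSum (χ ^ e.val)⁻¹ ψ⁻¹) := by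
          rw [mul_gaussSum_inv_eq_gaussSum]
    _ = gaussSum (χ ^ e.val) ψ * gaussSum (χ ^ e.val)⁻¹ ψ⁻¹ := by rw [hinvneg, one_mul]
    _ = (q : ℂ) := gaussSum_mul_gaussSum_eq_card hne1 hprim
  -- sqrt of q
  have hq0 : 0 < q := Fintype.card_pos
  set c : ℂ := ((Real.sqrt q : ℝ) : ℂ) with hc
  have hc2 : c * c = (q : ℂ) := by
    rw [hc, ← Complex.ofReal_mul, Real.mul_self_sqrt (by positivity)]
    norm_num
  have hc0 : c ≠ 0 := by
    rw [hc]
    simp only [ne_eq, Complex.ofReal_eq_zero]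
    positivity
  -- the involution product
  have hinvol : ∏ e : ZMod N, (f e / c) ^ m e = 1 := by
    refine Finset.prod_ninvolution (fun e => -e) ?_ ?_ (fun _ => Finset.mem_univ _) neg_neg
    · intro e
      rcases eq_or_ne e 0 with rfl | he
      · simp [hm0]
      · rw [← hmneg e, ← mul_pow, div_mul_div_comm, hkey e he, hc2, div_self
          (by exact_mod_cast Nat.cast_ne_zero.mpr hq0.ne')]
        exact one_pow _
    · intro e hne
      intro h
      apply hne
      have he0 : e = 0 := by
        have h2 : (2 : ZMod N) * e = 0 := by linear_combination -h
        have hu : IsUnit (2 : ZMod N) := by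
          rw [show ((2 : ZMod N)) = ((2 : ℕ) : ZMod N) by norm_num]
          rw [ZMod.isUnit_iff_coprime]
          exact Nat.coprime_two_left.mpr hNodd
        exact (hu.mul_right_eq_zero).mp h2
      rw [he0, hm0, pow_zero]
  -- conclude
  have heven : Even (n * (N - n)) := by
    rcases Nat.even_or_odd n with h | h
    · exact h.mul_right _
    · exact (Nat.Odd.sub_odd hNodd h).mul_left _
  obtain ⟨k, hk⟩ := heven
  have hP : ∏ e : ZMod N, f e ^ m e = c ^ (n * (N - n)) := by
    have hsplit : ∏ e : ZMod N, (f e / c) ^ m e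
        = (∏ e : ZMod N, f e ^ m e) / c ^ (∑ e : ZMod N, m e) := by
      rw [← Finset.prod_pow_eq_pow_sum, ← Finset.prod_div_distrib]
      exact Finset.prod_congr rfl fun e _ => by rw [div_pow]
    rw [hsplit, hsum] at hinvol
    field_simp at hinvol
    exact hinvol
  rw [show (∏ j : Fin n, ∏ s ∈ (Finset.univ \ Finset.image (fun j => -(b j)) Finset.univ),
      gaussSum (χ ^ (s + b j).val) ψ) = ∏ j : Fin n, ∏ s ∈ S, f (s + b j) from rfl]
  rw [step1, hP, hk, show k + k = 2 * k by ring, pow_mul, show c ^ 2 = (q : ℂ) by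
    rw [sq]; exact hc2]
  congr 1
  omega
end
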